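/- Let α, β₁, β₂, β₃, γ ∈ ℝ with α > 0, β₁ > 0, γ − α > 0, γ − β₁ > 0 and γ − α − β₁ > 0, and let x₂, x₃ ∈ (−1, 1). Then Lauricella's function evaluated at first argument 1 satisfies F_D(α; β₁, β₂, β₃; γ; 1, x₂, x₃) = (Γ(γ)Γ(γ−α−β₁)/(Γ(γ−α)Γ(γ−β₁))) · F₁(α, β₂, β₃; γ−β₁; x₂, x₃), where the triple series defining F_D(α;β₁,β₂,β₃;γ;1,x₂,x₃) converges under the stated hypotheses. -/

import Mathlib

open Filter Topology Asymptotics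

set_option maxHeartbeats 1000000


/-- The Pochhammer symbol `(q)_k = q(q+1)⋯(q+k−1)`. -/
noncomputable def poch (q : ℝ) (k : ℕ) : ℝ := ∏ i ∈ Finset.range k, (q + (i : ℝ))

lemma poch_zero (q : ℝ) : poch q 0 = 1 := Finset.prod_range_zero _

lemma poch_succ (q : ℝ) (k : ℕ) : poch q (k + 1) = poch q k * (q + k) :=
  Finset.prod_range_succ _ _

lemma poch_one_eq (q : ℝ) : poch q 1 = q := by simp [poch]

lemma poch_pos {q : ℝ} (hq : 0 < q) (k : ℕ) : 0 < poch q k :=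
  Finset.prod_pos fun i _ => by positivity

lemma poch_nonneg {q : ℝ} (hq : 0 < q) (k : ℕ) : 0 ≤ poch q k := (poch_pos hq k).le

lemma poch_ne_zero {q : ℝ} (hq : 0 < q) (k : ℕ) : poch q k ≠ 0 := (poch_pos hq k).ne'

lemma poch_add (q : ℝ) (m n : ℕ) : poch q (m + n) = poch q m * poch (q + m) n := by
  rw [poch, poch, poch, Finset.prod_range_add]
  congr 1
  refine Finset.prod_congr rfl fun i _ => ?_
  push_cast; ring

lemma poch_nat_one (n : ℕ) : poch 1 n = n.factorial := by
  induction n with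
  | zero => simp [poch_zero]
  | succ k ih => rw [poch_succ, ih, Nat.factorial_succ]; push_cast; ring

lemma abs_poch_le (q : ℝ) (k : ℕ) : |poch q k| ≤ poch |q| k := by
  rw [poch, poch, Finset.abs_prod]
  refine Finset.prod_le_prod (fun i _ => abs_nonneg _) fun i _ => ?_
  calc |q + (i:ℝ)| ≤ |q| + |(i:ℝ)| := abs_add_le _ _
  _ = |q| + i := by rw [Nat.abs_cast]

lemma poch_le_poch {q r : ℝ} (hq : 0 < q) (hqr : q ≤ r) (k : ℕ) : poch q k ≤ poch r k := by
  refine Finset.prod_le_prod (fun i _ => by positivity) fun i _ => by linarith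

lemma Gamma_poch {q : ℝ} (hq : 0 < q) (n : ℕ) :
    Real.Gamma (q + n) = Real.Gamma q * poch q n := by
  induction n with
  | zero => simp [poch_zero]
  | succ k ih =>
    have : q + (k + 1 : ℕ) = (q + k) + 1 := by push_cast; ring
    rw [this, Real.Gamma_add_one (by positivity), ih, poch_succ]; ring

lemma gammaSeq_eq (s : ℝ) (n : ℕ) :
    Real.GammaSeq s n = (n:ℝ) ^ s * n.factorial / poch s (n+1) := rfl

lemma gauss_ratio_tendsto (a b c : ℝ) (ha : 0 < a) (hb : 0 < b) (hc : 0 < c) :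
    Tendsto (fun n : ℕ => (n:ℝ) ^ (c + 1 - a - b) *
      (poch a (n+1) * poch b (n+1) / (poch c (n+1) * ((n+1).factorial : ℝ))))
      atTop (𝓝 (Real.Gamma c / (Real.Gamma a * Real.Gamma b))) := by
  have hGa := Real.Gamma_pos_of_pos ha
  have hGb := Real.Gamma_pos_of_pos hb
  have hR : Tendsto (fun n : ℕ => Real.GammaSeq c n * Real.GammaSeq 1 n /
      (Real.GammaSeq a n * Real.GammaSeq b n)) atTop
      (𝓝 (Real.Gamma c / (Real.Gamma a * Real.Gamma b))) := by
    have := ((Real.GammaSeq_tendsto_Gamma c).mul (Real.GammaSeq_tendsto_Gamma 1)).div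
      ((Real.GammaSeq_tendsto_Gamma a).mul (Real.GammaSeq_tendsto_Gamma b))
      (by positivity)
    rw [Real.Gamma_one, mul_one] at this
    exact this
  refine hR.congr' ?_
  filter_upwards [eventually_ge_atTop 1] with n hn
  have hn0 : (0:ℝ) < (n:ℝ) := by exact_mod_cast hn
  have hpow : (n:ℝ) ^ c * (n:ℝ) ^ (1:ℝ) / ((n:ℝ) ^ a * (n:ℝ) ^ b)
      = (n:ℝ) ^ (c + 1 - a - b) := by
    rw [← Real.rpow_add hn0, ← Real.rpow_add hn0, ← Real.rpow_sub hn0]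
    congr 1; ring
  rw [gammaSeq_eq, gammaSeq_eq, gammaSeq_eq, gammaSeq_eq, poch_nat_one, ← hpow]
  have h1 : poch a (n+1) ≠ 0 := (poch_pos ha _).ne'
  have h2 : poch b (n+1) ≠ 0 := (poch_pos hb _).ne'
  have h3 : poch c (n+1) ≠ 0 := (poch_pos hc _).ne'
  have h4 : ((n+1).factorial : ℝ) ≠ 0 := by positivity
  have h5 : (n.factorial : ℝ) ≠ 0 := by positivity
  have h6 : (n:ℝ) ^ a ≠ 0 := (Real.rpow_pos_of_pos hn0 _).ne'
  have h7 : (n:ℝ) ^ b ≠ 0 := (Real.rpow_pos_of_pos hn0 _).ne'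
  field_simp

noncomputable def gterm (a b c : ℝ) (m : ℕ) : ℝ :=
  poch a m * poch b m / (poch c m * (m.factorial : ℝ))

lemma tendsto_nat_rpow_zero {s : ℝ} (hs : s < 0) :
    Tendsto (fun n : ℕ => (n:ℝ) ^ s) atTop (𝓝 0) := by
  have h := (tendsto_rpow_neg_atTop (y := -s) (by linarith)).comp
    (tendsto_natCast_atTop_atTop (R := ℝ))
  simpa [Function.comp_def] using h

lemma gterm_pos {a b c : ℝ} (ha : 0 < a) (hb : 0 < b) (hc : 0 < c) (m : ℕ) :
    0 < gterm a b c m := by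
  have h1 := poch_pos ha m; have h2 := poch_pos hb m; have h3 := poch_pos hc m
  have h4 : (0:ℝ) < m.factorial := by exact_mod_cast m.factorial_pos
  unfold gterm; positivity

lemma gterm_tendsto {a b c : ℝ} (ha : 0 < a) (hb : 0 < b) (hc : 0 < c) :
    Tendsto (fun n : ℕ => (n:ℝ) ^ (c + 1 - a - b) * gterm a b c (n+1)) atTop
      (𝓝 (Real.Gamma c / (Real.Gamma a * Real.Gamma b))) := by
  have := gauss_ratio_tendsto a b c ha hb hc
  unfold gterm
  exact this

lemma gauss_summable {a b c : ℝ} (ha : 0 < a) (hb : 0 < b) (hs : 0 < c - a - b) :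
    Summable (gterm a b c) := by
  have hc : 0 < c := by linarith
  have hlim := gterm_tendsto ha hb hc
  obtain ⟨C, hC⟩ := (hlim.isBigO_one ℝ).bound
  have hsum : Summable (fun n : ℕ => (n:ℝ) ^ (a + b - c - 1)) :=
    Real.summable_nat_rpow.mpr (by linarith)
  have h2 : (fun n : ℕ => gterm a b c (n+1)) =O[atTop]
      (fun n : ℕ => (n:ℝ) ^ (a + b - c - 1)) := by
    refine IsBigO.of_bound C ?_
    filter_upwards [hC, eventually_ge_atTop 1] with n hCn hn
    have hn0 : (0:ℝ) < (n:ℝ) := by exact_mod_cast hn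
    have e2 : (n:ℝ) ^ (c + 1 - a - b) * (n:ℝ) ^ (a + b - c - 1) = 1 := by
      rw [← Real.rpow_add hn0, show c + 1 - a - b + (a + b - c - 1) = 0 by ring,
        Real.rpow_zero]
    have hG : gterm a b c (n+1)
        = ((n:ℝ) ^ (c + 1 - a - b) * gterm a b c (n+1)) * (n:ℝ) ^ (a + b - c - 1) := by
      rw [mul_comm ((n:ℝ) ^ (c + 1 - a - b)) _, mul_assoc, e2, mul_one]
    simp only [norm_one, mul_one] at hCn
    have hthis : ‖(n:ℝ) ^ (a + b - c - 1)‖ = (n:ℝ) ^ (a + b - c - 1) :=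
      Real.norm_of_nonneg (Real.rpow_nonneg hn0.le _)
    have hnn : 0 ≤ (n:ℝ) ^ (a + b - c - 1) := Real.rpow_nonneg hn0.le _
    rw [hG, norm_mul, hthis]
    exact mul_le_mul_of_nonneg_right hCn hnn
  exact (summable_nat_add_iff 1).mp (summable_of_isBigO_nat hsum h2)

lemma gauss_mul_tendsto_zero {a b c : ℝ} (ha : 0 < a) (hb : 0 < b) (hs : 0 < c - a - b) :
    Tendsto (fun m : ℕ => (m:ℝ) * gterm a b c m) atTop (𝓝 0) := by
  have hc : 0 < c := by linarith
  have hlim := gterm_tendsto ha hb hc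
  rw [← tendsto_add_atTop_iff_nat 1]
  have hz : Tendsto (fun n : ℕ => (n:ℝ) ^ (a + b - c) + (n:ℝ) ^ (a + b - c - 1))
      atTop (𝓝 0) := by
    have h1 := tendsto_nat_rpow_zero (s := a + b - c) (by linarith)
    have h2 := tendsto_nat_rpow_zero (s := a + b - c - 1) (by linarith)
    simpa using h1.add h2
  have key := hlim.mul hz
  rw [mul_zero] at key
  refine key.congr' ?_
  filter_upwards [eventually_ge_atTop 1] with n hn
  have hn0 : (0:ℝ) < (n:ℝ) := by exact_mod_cast hn
  have e1 : (n:ℝ) ^ (c + 1 - a - b) * (n:ℝ) ^ (a + b - c) = (n:ℝ) := by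
    rw [← Real.rpow_add hn0, show c + 1 - a - b + (a + b - c) = 1 by ring, Real.rpow_one]
  have e2 : (n:ℝ) ^ (c + 1 - a - b) * (n:ℝ) ^ (a + b - c - 1) = 1 := by
    rw [← Real.rpow_add hn0, show c + 1 - a - b + (a + b - c - 1) = 0 by ring,
      Real.rpow_zero]
  push_cast
  linear_combination gterm a b c (n+1) * e1 + gterm a b c (n+1) * e2

lemma poch_one_add (q : ℝ) (n : ℕ) : poch q (n + 1) = q * poch (q + 1) n := by
  rw [show n + 1 = 1 + n from (add_comm _ _), poch_add, poch_one_eq]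
  norm_num

lemma gauss_step {a b c : ℝ} (ha : 0 < a) (hb : 0 < b) (hs : 0 < c - a - b) :
    ∑' m, gterm a b c m
      = (c - a) * (c - b) / (c * (c - a - b)) * ∑' m, gterm a b (c + 1) m := by
  have hc : 0 < c := by linarith
  have hu : Summable (gterm a b c) := gauss_summable ha hb hs
  have hv : Summable (gterm a b (c+1)) := gauss_summable ha hb (by linarith)
  set W : ℕ → ℝ := fun m => -(c * m * gterm a b c m) with hW
  have hW0 : Tendsto W atTop (𝓝 0) := by
    have := (gauss_mul_tendsto_zero ha hb hs).const_mul (-c)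
    rw [mul_zero] at this
    refine this.congr fun m => by simp [hW]; ring
  have hkey : ∀ m : ℕ, c * (c - a - b) * gterm a b c m
      - (c - a) * (c - b) * gterm a b (c+1) m = W (m+1) - W m := by
    intro m
    have hv1 : poch (c+1) m = poch c m * (c + m) / c := by
      have h1 : poch c (m+1) = poch c m * (c + m) := poch_succ c m
      have h2 : poch c (m+1) = c * poch (c+1) m := poch_one_add c m
      field_simp
      linarith [h1, h2]
    have hPa := poch_succ a m
    have hPb := poch_succ b m
    have hPc := poch_succ c m
    have hfac : ((m+1).factorial : ℝ) = (m.factorial : ℝ) * (m+1) := by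
      rw [Nat.factorial_succ]; push_cast; ring
    have hcm : (0:ℝ) < c + m := by positivity
    have hf : (0:ℝ) < (m.factorial : ℝ) := by exact_mod_cast m.factorial_pos
    have hRc := poch_pos hc m
    simp only [hW, gterm, hv1, hPa, hPb, hPc, hfac]
    push_cast
    field_simp
    ring
  have hsum_diff : Summable (fun m => c * (c - a - b) * gterm a b c m
      - (c - a) * (c - b) * gterm a b (c+1) m) := (hu.mul_left _).sub (hv.mul_left _)
  have htsum0 : ∑' m, (c * (c - a - b) * gterm a b c m
      - (c - a) * (c - b) * gterm a b (c+1) m) = 0 := by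
    have hps := hsum_diff.hasSum.tendsto_sum_nat
    have heq : (fun M => ∑ m ∈ Finset.range M, (c * (c - a - b) * gterm a b c m
        - (c - a) * (c - b) * gterm a b (c+1) m)) = fun M => W M - W 0 := by
      funext M
      rw [Finset.sum_congr rfl fun m _ => hkey m, Finset.sum_range_sub]
    rw [heq] at hps
    have hW00 : W 0 = 0 := by simp [hW]
    rw [hW00] at hps
    have hlim2 : Tendsto (fun M => W M - 0) atTop (𝓝 0) := by
      simpa using hW0.sub_const 0
    exact tendsto_nhds_unique hps hlim2
  rw [Summable.tsum_sub (hu.mul_left _) (hv.mul_left _), tsum_mul_left, tsum_mul_left] at htsum0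
  have hne : c * (c - a - b) ≠ 0 := by positivity
  field_simp
  linarith [htsum0]

lemma gauss_iter {a b : ℝ} (ha : 0 < a) (hb : 0 < b) :
    ∀ (N : ℕ) (c : ℝ), 0 < c - a - b →
    ∑' m, gterm a b c m = poch (c-a) N * poch (c-b) N / (poch c N * poch (c-a-b) N)
      * ∑' m, gterm a b (c + N) m := by
  intro N
  induction N with
  | zero => intro c hs; simp [poch_zero]
  | succ N ih =>
    intro c hs
    have hc : 0 < c := by linarith
    have hca : 0 < c - a := by linarith
    have hcb : 0 < c - b := by linarith
    rw [gauss_step ha hb hs, ih (c+1) (by linarith)]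
    have hcast : c + 1 + (N:ℝ) = c + ((N:ℕ)+1 : ℕ) := by push_cast; ring
    rw [hcast]
    rw [poch_one_add (c-a) N, poch_one_add (c-b) N, poch_one_add c N,
      poch_one_add (c-a-b) N,
      show c - a + 1 = c + 1 - a by ring, show c - b + 1 = c + 1 - b by ring,
      show c - a - b + 1 = c + 1 - a - b by ring]
    have h1 : poch (c+1) N ≠ 0 := (poch_pos (by linarith) N).ne'
    have h2 : poch (c+1-a-b) N ≠ 0 := (poch_pos (by linarith) N).ne'
    have h3 : c ≠ 0 := hc.ne'
    have h4 : c - a - b ≠ 0 := hs.ne'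
    field_simp

lemma prefactor_tendsto {a b c : ℝ} (ha : 0 < a) (hb : 0 < b) (hs : 0 < c - a - b) :
    Tendsto (fun N : ℕ => poch (c-a) N * poch (c-b) N / (poch c N * poch (c-a-b) N))
      atTop (𝓝 (Real.Gamma c * Real.Gamma (c-a-b) /
        (Real.Gamma (c-a) * Real.Gamma (c-b)))) := by
  have hc : 0 < c := by linarith
  have hca : 0 < c - a := by linarith
  have hcb : 0 < c - b := by linarith
  have hR : Tendsto (fun n : ℕ => Real.GammaSeq c n * Real.GammaSeq (c-a-b) n /
      (Real.GammaSeq (c-a) n * Real.GammaSeq (c-b) n)) atTop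
      (𝓝 (Real.Gamma c * Real.Gamma (c-a-b) / (Real.Gamma (c-a) * Real.Gamma (c-b)))) := by
    refine ((Real.GammaSeq_tendsto_Gamma c).mul (Real.GammaSeq_tendsto_Gamma (c-a-b))).div
      ((Real.GammaSeq_tendsto_Gamma (c-a)).mul (Real.GammaSeq_tendsto_Gamma (c-b))) ?_
    have := Real.Gamma_pos_of_pos hca
    have := Real.Gamma_pos_of_pos hcb
    positivity
  rw [← tendsto_add_atTop_iff_nat 1]
  refine hR.congr' ?_
  filter_upwards [eventually_ge_atTop 1] with n hn
  have hn0 : (0:ℝ) < (n:ℝ) := by exact_mod_cast hn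
  have hdiv : (n:ℝ) ^ c * (n:ℝ) ^ (c-a-b) / ((n:ℝ) ^ (c-a) * (n:ℝ) ^ (c-b)) = 1 := by
    rw [← Real.rpow_add hn0, ← Real.rpow_add hn0, div_eq_one_iff_eq
      (Real.rpow_pos_of_pos hn0 _).ne']
    congr 1; ring
  have p1 : poch c (n+1) ≠ 0 := (poch_pos hc _).ne'
  have p2 : poch (c-a-b) (n+1) ≠ 0 := (poch_pos hs _).ne'
  have p3 : poch (c-a) (n+1) ≠ 0 := (poch_pos hca _).ne'
  have p4 : poch (c-b) (n+1) ≠ 0 := (poch_pos hcb _).ne'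
  have hf : (n.factorial : ℝ) ≠ 0 := by positivity
  have r1 : (n:ℝ) ^ c ≠ 0 := (Real.rpow_pos_of_pos hn0 _).ne'
  have r2 : (n:ℝ) ^ (c-a-b) ≠ 0 := (Real.rpow_pos_of_pos hn0 _).ne'
  have r3 : (n:ℝ) ^ (c-a) ≠ 0 := (Real.rpow_pos_of_pos hn0 _).ne'
  have r4 : (n:ℝ) ^ (c-b) ≠ 0 := (Real.rpow_pos_of_pos hn0 _).ne'
  calc Real.GammaSeq c n * Real.GammaSeq (c-a-b) n /
      (Real.GammaSeq (c-a) n * Real.GammaSeq (c-b) n)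
      = ((n:ℝ) ^ c * (n:ℝ) ^ (c-a-b) / ((n:ℝ) ^ (c-a) * (n:ℝ) ^ (c-b))) *
        (poch (c-a) (n+1) * poch (c-b) (n+1) / (poch c (n+1) * poch (c-a-b) (n+1))) := by
        rw [gammaSeq_eq, gammaSeq_eq, gammaSeq_eq, gammaSeq_eq]
        field_simp
    _ = poch (c-a) (n+1) * poch (c-b) (n+1) / (poch c (n+1) * poch (c-a-b) (n+1)) := by
        rw [hdiv, one_mul]

lemma tail_tendsto {a b c : ℝ} (ha : 0 < a) (hb : 0 < b) (hs : 0 < c - a - b) :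
    Tendsto (fun N : ℕ => ∑' m, gterm a b (c + N) m) atTop (𝓝 1) := by
  have hc : 0 < c := by linarith
  have hvN : ∀ N : ℕ, Summable (gterm a b (c + N)) := by
    intro N
    refine gauss_summable ha hb ?_
    have : (0:ℝ) ≤ N := Nat.cast_nonneg N
    linarith
  have hu : Summable (gterm a b c) := gauss_summable ha hb hs
  have hK : Summable (fun m => gterm a b c (m+1)) := (summable_nat_add_iff 1).mpr hu
  set K := ∑' m, gterm a b c (m+1) with hKdef
  have key : ∀ (N : ℕ) (m : ℕ),
      gterm a b (c + N) (m+1) ≤ c / (c + N) * gterm a b c (m+1) := by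
    intro N m
    have hNn : (0:ℝ) ≤ N := Nat.cast_nonneg N
    have h1 : poch (c + N) (m+1) = (c + N) * poch (c + N + 1) m := poch_one_add _ m
    have h3 : poch c (m+1) = c * poch (c+1) m := poch_one_add c m
    have h2 : poch (c+1) m ≤ poch (c + N + 1) m :=
      poch_le_poch (by linarith) (by linarith) m
    have hineq : (c + N) * poch c (m+1) ≤ c * poch (c + N) (m+1) := by
      rw [h1, h3]
      have h5 := mul_le_mul_of_nonneg_left h2 (show (0:ℝ) ≤ c * (c + N) by positivity)
      nlinarith [h5]
    have hPa := poch_pos ha (m+1)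
    have hPb := poch_pos hb (m+1)
    have hPc := poch_pos hc (m+1)
    have hPcN := poch_pos (show (0:ℝ) < c + N by linarith) (m+1)
    have hF : (0:ℝ) < ((m+1).factorial : ℝ) := by exact_mod_cast (m+1).factorial_pos
    rw [gterm, gterm, div_mul_div_comm]
    rw [div_le_div_iff₀ (by positivity) (by positivity)]
    have hnn : (0:ℝ) ≤ poch a (m+1) * poch b (m+1) * ((m+1).factorial : ℝ) := by positivity
    nlinarith [mul_le_mul_of_nonneg_left hineq hnn]
  have htail : ∀ N : ℕ, ∑' m, gterm a b (c + N) (m+1) ≤ c / (c + N) * K := by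
    intro N
    have hsN : Summable (fun m => gterm a b (c + N) (m+1)) :=
      (summable_nat_add_iff 1).mpr (hvN N)
    calc ∑' m, gterm a b (c + N) (m+1)
        ≤ ∑' m, c / (c + N) * gterm a b c (m+1) :=
          Summable.tsum_le_tsum (key N) hsN (hK.mul_left _)
      _ = c / (c + N) * K := tsum_mul_left
  have htail0 : ∀ N : ℕ, 0 ≤ ∑' m, gterm a b (c + N) (m+1) := by
    intro N
    refine tsum_nonneg fun m => ?_
    have : (0:ℝ) ≤ N := Nat.cast_nonneg N
    exact (gterm_pos ha hb (show (0:ℝ) < c + N by linarith) (m+1)).le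
  have hfrac : Tendsto (fun N : ℕ => c / (c + N) * K) atTop (𝓝 0) := by
    have h : Tendsto (fun N : ℕ => c + (N:ℝ)) atTop atTop :=
      tendsto_atTop_add_const_left _ c tendsto_natCast_atTop_atTop
    have := Tendsto.div_atTop (tendsto_const_nhds (x := c)) h
    simpa using this.mul_const K
  have hTail : Tendsto (fun N : ℕ => ∑' m, gterm a b (c + N) (m+1)) atTop (𝓝 0) :=
    tendsto_of_tendsto_of_tendsto_of_le_of_le tendsto_const_nhds hfrac htail0 htail
  have hrw : (fun N : ℕ => ∑' m, gterm a b (c + N) m)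
      = fun N : ℕ => 1 + ∑' m, gterm a b (c + N) (m+1) := by
    funext N
    rw [Summable.tsum_eq_zero_add (hvN N)]
    congr 1
    simp [gterm, poch_zero]
  rw [hrw]
  simpa using (tendsto_const_nhds (x := (1:ℝ))).add hTail

theorem gauss_sum {a b c : ℝ} (ha : 0 < a) (hb : 0 < b) (hs : 0 < c - a - b) :
    ∑' m, gterm a b c m = Real.Gamma c * Real.Gamma (c - a - b) /
      (Real.Gamma (c - a) * Real.Gamma (c - b)) := by
  have h := (prefactor_tendsto ha hb hs).mul (tail_tendsto ha hb hs)
  rw [mul_one] at h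
  have h2 : Tendsto (fun _ : ℕ => ∑' m, gterm a b c m) atTop
      (𝓝 (Real.Gamma c * Real.Gamma (c - a - b) /
        (Real.Gamma (c - a) * Real.Gamma (c - b)))) := by
    refine h.congr fun N => ?_
    exact (gauss_iter ha hb N c hs).symm
  exact tendsto_nhds_unique tendsto_const_nhds h2

lemma summable_abs_poch_geom {β x : ℝ} (hx : |x| < 1) :
    Summable (fun n : ℕ => |poch β n| * |x| ^ n / n.factorial) := by
  set r : ℝ := (1 + |x|) / 2 with hr
  have hax : 0 ≤ |x| := abs_nonneg x
  have hr1 : r < 1 := by rw [hr]; linarith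
  have hxr : |x| < r := by rw [hr]; linarith
  have h1 : Tendsto (fun n : ℕ => (((n:ℝ) + |β|) / ((n:ℝ) + 1)) * |x|) atTop (𝓝 |x|) := by
    have hd : Tendsto (fun n : ℕ => (|β| - 1) / ((n:ℝ) + 1)) atTop (𝓝 0) :=
      Tendsto.div_atTop tendsto_const_nhds
        (tendsto_atTop_add_const_right _ 1 tendsto_natCast_atTop_atTop)
    have h2 : Tendsto (fun n : ℕ => (1 + (|β| - 1) / ((n:ℝ) + 1)) * |x|) atTop
        (𝓝 ((1 + 0) * |x|)) := (Tendsto.add tendsto_const_nhds hd).mul_const _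
    rw [show ((1:ℝ) + 0) * |x| = |x| by ring] at h2
    refine h2.congr fun n => ?_
    have hn1 : (0:ℝ) < (n:ℝ) + 1 := by positivity
    field_simp
    ring
  have hev : ∀ᶠ n : ℕ in atTop, (((n:ℝ) + |β|) / ((n:ℝ) + 1)) * |x| < r :=
    h1.eventually_lt_const hxr
  refine summable_of_ratio_norm_eventually_le hr1 ?_
  filter_upwards [hev] with n hn
  have hn1 : (0:ℝ) < (n:ℝ) + 1 := by positivity
  have hfn : (0:ℝ) < n.factorial := by exact_mod_cast n.factorial_pos
  rw [Real.norm_of_nonneg (by positivity), Real.norm_of_nonneg (by positivity)]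
  have e : |poch β (n+1)| * |x| ^ (n+1) / ((n+1).factorial : ℝ)
      = (|poch β n| * |x| ^ n / n.factorial) * (|β + n| * |x| / ((n:ℝ) + 1)) := by
    rw [poch_succ, abs_mul, pow_succ, Nat.factorial_succ]
    push_cast
    field_simp
  rw [e]
  have hb1 : |β + (n:ℝ)| * |x| / ((n:ℝ) + 1) ≤ (((n:ℝ) + |β|) / ((n:ℝ) + 1)) * |x| := by
    rw [div_mul_eq_mul_div]
    gcongr
    calc |β + (n:ℝ)| ≤ |β| + |(n:ℝ)| := abs_add_le _ _
      _ = (n:ℝ) + |β| := by rw [Nat.abs_cast]; ring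
  have := le_of_lt (lt_of_le_of_lt hb1 hn)
  calc (|poch β n| * |x| ^ n / n.factorial) * (|β + n| * |x| / ((n:ℝ) + 1))
      ≤ (|poch β n| * |x| ^ n / n.factorial) * r :=
        mul_le_mul_of_nonneg_left this (by positivity)
    _ = r * (|poch β n| * |x| ^ n / n.factorial) := by ring


/-- Appell's first hypergeometric series
`F₁(α,β,β′;γ;x,y) = Σ_{m,n} (α)_{m+n}(β)_m(β′)_n/((γ)_{m+n} m! n!) x^m y^n`. -/
noncomputable def appellF1 (α β β' γ x y : ℝ) : ℝ :=
  ∑' p : ℕ × ℕ,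
    poch α (p.1 + p.2) * poch β p.1 * poch β' p.2 /
        (poch γ (p.1 + p.2) * (p.1.factorial : ℝ) * (p.2.factorial : ℝ)) *
      x ^ p.1 * y ^ p.2

/-- Lauricella's fourth hypergeometric series of three variables
`F_D(α;β₁,β₂,β₃;γ;x,y,z)
  = Σ_{m,n,p} (α)_{m+n+p}(β₁)_m(β₂)_n(β₃)_p/((γ)_{m+n+p} m! n! p!) x^m y^n z^p`. -/
noncomputable def lauricellaFD (α β₁ β₂ β₃ γ x y z : ℝ) : ℝ :=
  ∑' p : ℕ × ℕ × ℕ,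
    poch α (p.1 + p.2.1 + p.2.2) * poch β₁ p.1 * poch β₂ p.2.1 * poch β₃ p.2.2 /
        (poch γ (p.1 + p.2.1 + p.2.2) * (p.1.factorial : ℝ) * (p.2.1.factorial : ℝ) *
          (p.2.2.factorial : ℝ)) *
      x ^ p.1 * y ^ p.2.1 * z ^ p.2.2

/-- Lauricella's `F_D` at first argument `1`:
the defining triple series converges and
`F_D(α;β₁,β₂,β₃;γ;1,x₂,x₃) = Γ(γ)Γ(γ−α−β₁)/(Γ(γ−α)Γ(γ−β₁)) · F₁(α,β₂,β₃;γ−β₁;x₂,x₃)`. -/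
theorem stmt_16 (α β₁ β₂ β₃ γ x₂ x₃ : ℝ)
    (hα : 0 < α) (hβ₁ : 0 < β₁) (h1 : 0 < γ - α) (h2 : 0 < γ - β₁) (h3 : 0 < γ - α - β₁)
    (hx₂ : x₂ ∈ Set.Ioo (-1 : ℝ) 1) (hx₃ : x₃ ∈ Set.Ioo (-1 : ℝ) 1) :
    Summable (fun p : ℕ × ℕ × ℕ =>
        poch α (p.1 + p.2.1 + p.2.2) * poch β₁ p.1 * poch β₂ p.2.1 * poch β₃ p.2.2 /
            (poch γ (p.1 + p.2.1 + p.2.2) * (p.1.factorial : ℝ) * (p.2.1.factorial : ℝ) *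
              (p.2.2.factorial : ℝ)) *
          (1 : ℝ) ^ p.1 * x₂ ^ p.2.1 * x₃ ^ p.2.2)
    ∧ lauricellaFD α β₁ β₂ β₃ γ 1 x₂ x₃
        = Real.Gamma γ * Real.Gamma (γ - α - β₁) /
            (Real.Gamma (γ - α) * Real.Gamma (γ - β₁)) *
          appellF1 α β₂ β₃ (γ - β₁) x₂ x₃ := by
  obtain ⟨hx₂l, hx₂r⟩ := hx₂
  obtain ⟨hx₃l, hx₃r⟩ := hx₃
  have hax₂ : |x₂| < 1 := abs_lt.mpr ⟨hx₂l, hx₂r⟩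
  have hax₃ : |x₃| < 1 := abs_lt.mpr ⟨hx₃l, hx₃r⟩
  have hγ : 0 < γ := by linarith
  set F : ℕ × ℕ × ℕ → ℝ := fun p =>
    poch α (p.1 + p.2.1 + p.2.2) * poch β₁ p.1 * poch β₂ p.2.1 * poch β₃ p.2.2 /
        (poch γ (p.1 + p.2.1 + p.2.2) * (p.1.factorial : ℝ) * (p.2.1.factorial : ℝ) *
          (p.2.2.factorial : ℝ)) *
      (1 : ℝ) ^ p.1 * x₂ ^ p.2.1 * x₃ ^ p.2.2 with hF
  -- the dominating product series
  set g : ℕ → ℝ := fun n => |poch β₂ n| * |x₂| ^ n / n.factorial with hg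
  set h : ℕ → ℝ := fun n => |poch β₃ n| * |x₃| ^ n / n.factorial with hh
  have hgs : Summable g := summable_abs_poch_geom hax₂
  have hhs : Summable h := summable_abs_poch_geom hax₃
  have hus : Summable (gterm α β₁ γ) := gauss_summable hα hβ₁ h3
  have hgnn : ∀ n, 0 ≤ g n := fun n => by
    have : (0:ℝ) < n.factorial := by exact_mod_cast n.factorial_pos
    positivity
  have hhnn : ∀ n, 0 ≤ h n := fun n => by
    have : (0:ℝ) < n.factorial := by exact_mod_cast n.factorial_pos
    positivity
  have hunn : ∀ m, 0 ≤ gterm α β₁ γ m := fun m => by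
    have h1 := poch_pos hα m; have h2 := poch_pos hβ₁ m; have h3 := poch_pos hγ m
    have : (0:ℝ) < m.factorial := by exact_mod_cast m.factorial_pos
    unfold gterm; positivity
  have hprod : Summable (fun p : ℕ × ℕ × ℕ => gterm α β₁ γ p.1 * (g p.2.1 * h p.2.2)) := by
    have h1 : Summable (fun q : ℕ × ℕ => g q.1 * h q.2) :=
      hgs.mul_of_nonneg hhs (fun n => hgnn n) (fun n => hhnn n)
    have h2 : Summable (fun x : ℕ × (ℕ × ℕ) => gterm α β₁ γ x.1 * (g x.2.1 * h x.2.2)) :=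
      hus.mul_of_nonneg h1 (fun m => hunn m) (fun q => mul_nonneg (hgnn q.1) (hhnn q.2))
    exact h2
  -- the key bound
  have hbound : ∀ p : ℕ × ℕ × ℕ, ‖F p‖ ≤ gterm α β₁ γ p.1 * (g p.2.1 * h p.2.2) := by
    rintro ⟨m, n, p⟩
    simp only [hF]
    have hK : m + n + p = m + (n + p) := by omega
    have hfm : (0:ℝ) < m.factorial := by exact_mod_cast m.factorial_pos
    have hfn : (0:ℝ) < n.factorial := by exact_mod_cast n.factorial_pos
    have hfp : (0:ℝ) < p.factorial := by exact_mod_cast p.factorial_pos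
    have hpαK := poch_pos hα (m + n + p)
    have hpγK := poch_pos hγ (m + n + p)
    have hpβ₁ := poch_pos hβ₁ m
    have hpαm := poch_pos hα m
    have hpγm := poch_pos hγ m
    have hdiv : poch α (m + n + p) / poch γ (m + n + p) ≤ poch α m / poch γ m := by
      rw [div_le_div_iff₀ hpγK hpγm, hK, poch_add α, poch_add γ]
      have hle : poch (α + m) (n + p) ≤ poch (γ + m) (n + p) :=
        poch_le_poch (by positivity) (by linarith) (n + p)
      nlinarith [mul_le_mul_of_nonneg_left hle
        (show (0:ℝ) ≤ poch α m * poch γ m by positivity),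
        poch_pos (show (0:ℝ) < α + m by positivity) (n + p)]
    have habs : ‖poch α (m + n + p) * poch β₁ m * poch β₂ n * poch β₃ p /
        (poch γ (m + n + p) * (m.factorial : ℝ) * (n.factorial : ℝ) * (p.factorial : ℝ)) *
        (1:ℝ) ^ m * x₂ ^ n * x₃ ^ p‖
        = (poch α (m + n + p) / poch γ (m + n + p)) * (poch β₁ m / m.factorial) *
          (|poch β₂ n| * |x₂| ^ n / n.factorial) * (|poch β₃ p| * |x₃| ^ p / p.factorial) := by
      simp only [Real.norm_eq_abs, one_pow, mul_one, abs_mul, abs_div, abs_pow,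
        abs_of_pos hpαK, abs_of_pos hpβ₁, abs_of_pos hpγK,
        abs_of_pos hfm, abs_of_pos hfn, abs_of_pos hfp]
      field_simp
    rw [habs]
    have hfin : (poch α m / poch γ m) * (poch β₁ m / m.factorial) *
          (|poch β₂ n| * |x₂| ^ n / n.factorial) * (|poch β₃ p| * |x₃| ^ p / p.factorial)
        = gterm α β₁ γ m * (g n * h p) := by
      simp only [gterm, hg, hh]
      field_simp
    calc (poch α (m + n + p) / poch γ (m + n + p)) * (poch β₁ m / m.factorial) *
          (|poch β₂ n| * |x₂| ^ n / n.factorial) * (|poch β₃ p| * |x₃| ^ p / p.factorial)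
        ≤ (poch α m / poch γ m) * (poch β₁ m / m.factorial) *
          (|poch β₂ n| * |x₂| ^ n / n.factorial) * (|poch β₃ p| * |x₃| ^ p / p.factorial) := by
          gcongr
      _ = gterm α β₁ γ m * (g n * h p) := hfin
  have hsummF : Summable F := Summable.of_norm_bounded hprod hbound
  refine ⟨hsummF, ?_⟩
  -- now the evaluation
  have hGγα : 0 < Real.Gamma (γ - α) := Real.Gamma_pos_of_pos h1
  have hGγβ : 0 < Real.Gamma (γ - β₁) := Real.Gamma_pos_of_pos h2
  have hinner : ∀ q : ℕ × ℕ, (∑' m : ℕ, F (m, q)) =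
      (Real.Gamma γ * Real.Gamma (γ - α - β₁) /
        (Real.Gamma (γ - α) * Real.Gamma (γ - β₁))) *
      (poch α (q.1 + q.2) * poch β₂ q.1 * poch β₃ q.2 /
          (poch (γ - β₁) (q.1 + q.2) * (q.1.factorial : ℝ) * (q.2.factorial : ℝ)) *
        x₂ ^ q.1 * x₃ ^ q.2) := by
    rintro ⟨n, p⟩
    have hfn : (0:ℝ) < n.factorial := by exact_mod_cast n.factorial_pos
    have hfp : (0:ℝ) < p.factorial := by exact_mod_cast p.factorial_pos
    have hpγK := poch_pos hγ (n + p)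
    have hpγβK := poch_pos h2 (n + p)
    have hterm : ∀ m : ℕ, F (m, n, p) =
        (poch α (n + p) * poch β₂ n * poch β₃ p * x₂ ^ n * x₃ ^ p /
          (poch γ (n + p) * (n.factorial : ℝ) * (p.factorial : ℝ))) *
        gterm (α + (n + p : ℕ)) β₁ (γ + (n + p : ℕ)) m := by
      intro m
      simp only [hF]
      have hsplit : m + n + p = (n + p) + m := by omega
      rw [hsplit, poch_add α (n + p) m, poch_add γ (n + p) m]
      simp only [gterm]
      have hpαm := poch_pos (show (0:ℝ) < α + (n + p : ℕ) by positivity) m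
      have hpγm := poch_pos (show (0:ℝ) < γ + (n + p : ℕ) by positivity) m
      have hfm : (0:ℝ) < m.factorial := by exact_mod_cast m.factorial_pos
      field_simp
      ring
    have hgauss := gauss_sum (a := α + ((n + p : ℕ) : ℝ)) (b := β₁)
      (c := γ + ((n + p : ℕ) : ℝ)) (by positivity) hβ₁ (by linarith)
    rw [tsum_congr hterm, tsum_mul_left, hgauss,
      show (γ + ((n + p : ℕ) : ℝ)) - (α + ((n + p : ℕ) : ℝ)) - β₁ = γ - α - β₁ by ring,
      show (γ + ((n + p : ℕ) : ℝ)) - (α + ((n + p : ℕ) : ℝ)) = γ - α by ring,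
      show (γ + ((n + p : ℕ) : ℝ)) - β₁ = (γ - β₁) + ((n + p : ℕ) : ℝ) by ring,
      Gamma_poch hγ (n + p), Gamma_poch h2 (n + p)]
    field_simp
  have hstep1 : (∑' p : ℕ × ℕ × ℕ, F p) = ∑' (q : ℕ × ℕ), ∑' (m : ℕ), F (m, q) := by
    rw [Summable.tsum_prod hsummF]
    exact (Summable.tsum_comm (f := fun (m : ℕ) (q : ℕ × ℕ) => F (m, q)) hsummF).symm
  have hFD : lauricellaFD α β₁ β₂ β₃ γ 1 x₂ x₃ = ∑' p : ℕ × ℕ × ℕ, F p := rfl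
  rw [hFD, hstep1, tsum_congr hinner, tsum_mul_left]
  rfl
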